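/- Let d be a positive integer and let (S, dist) be a complete separable metric space with Borel σ-field 𝒮. Let (μ(k), k ∈ N^d) be an array of probability measures on (S, 𝒮) and let ν be a probability measure on (S, 𝒮). Suppose that for every u ∈ {1,...,d} and every sequence (L^{(n)}, n ∈ N) of elements of N^d such that L^{(n)}_u = n for all n ≥ 1 and L^{(n)}_v → ∞ as n → ∞ for every v ∈ {1,...,d}\{u}, the measures μ(L^{(n)}) converge weakly to ν. Then μ(L) converges weakly to ν as min{L_1,...,L_d} → ∞; i.e., for every sequence (L^{(n)}) in N^d with min_u L^{(n)}_u → ∞, μ(L^{(n)}) ⇒ ν. -/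
import Mathlib


open Filter MeasureTheory

/-- Proposition (II): if along every sequence `(L^{(n)})` in `ℕ^d` with
`L^{(n)}_u = n` and all other coordinates tending to `∞` the probability
measures `μ(L^{(n)})` converge weakly to `ν`, then `μ(L) ⇒ ν` as
`min{L₁,…,L_d} → ∞` (weak convergence being tested against bounded
continuous real functions). -/
theorem weak_convergence_of_sequential_weak_convergence
    {S : Type*} [MetricSpace S] [CompleteSpace S]
    [TopologicalSpace.SeparableSpace S] [MeasurableSpace S] [BorelSpace S]
    (d : ℕ) (hd : 0 < d)
    (μ : (Fin d → ℕ) → Measure S) (ν : Measure S)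
    (hμ : ∀ k, IsProbabilityMeasure (μ k)) (hν : IsProbabilityMeasure ν)
    (h : ∀ u : Fin d, ∀ L : ℕ → (Fin d → ℕ),
      (∀ n : ℕ, L n u = n) →
      (∀ v : Fin d, v ≠ u → Tendsto (fun n => L n v) atTop atTop) →
      ∀ f : BoundedContinuousFunction S ℝ,
        Tendsto (fun n => ∫ x, f x ∂(μ (L n))) atTop (nhds (∫ x, f x ∂ν))) :
    ∀ f : BoundedContinuousFunction S ℝ,
      Tendsto (fun L : Fin d → ℕ => ∫ x, f x ∂(μ L)) atTop
        (nhds (∫ x, f x ∂ν)) := by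
  classical
  intro f
  apply tendsto_of_subseq_tendsto
  intro ns hns
  set u : Fin d := ⟨0, hd⟩ with hu_def
  have hcoords : ∀ i : Fin d, Tendsto (fun n => ns n i) atTop atTop := by
    intro i
    rw [tendsto_atTop_atTop]
    intro N
    have := (tendsto_atTop.mp hns) (fun _ => N)
    obtain ⟨m, hm⟩ := eventually_atTop.mp this
    exact ⟨m, fun n hn => hm n hn i⟩
  obtain ⟨φ, hφmono, hgmono⟩ :=
    strictMono_subseq_of_tendsto_atTop (hcoords u)
  set g : ℕ → ℕ := fun k => ns (φ k) u with hg_def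
  have hgmono' : StrictMono g := hgmono
  -- auxiliary sequence with u-th coordinate equal to n
  set M : ℕ → (Fin d → ℕ) := fun n =>
    if hn : ∃ k, g k = n then ns (φ hn.choose) else fun _ => n with hM_def
  have hMu : ∀ n, M n u = n := by
    intro n
    by_cases hn : ∃ k, g k = n
    · simp only [hM_def, dif_pos hn]
      exact hn.choose_spec
    · simp [hM_def, dif_neg hn]
  have hMg : ∀ k, M (g k) = ns (φ k) := by
    intro k
    have hn : ∃ k', g k' = g k := ⟨k, rfl⟩
    have : hn.choose = k := hgmono'.injective hn.choose_spec
    simp only [hM_def, dif_pos hn, this]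
  have hMv : ∀ v : Fin d, v ≠ u → Tendsto (fun n => M n v) atTop atTop := by
    intro v _
    rw [tendsto_atTop_atTop]
    intro N
    have hv : Tendsto (fun k => ns (φ k) v) atTop atTop :=
      (hcoords v).comp hφmono.tendsto_atTop
    obtain ⟨K, hK⟩ := (tendsto_atTop_atTop.mp hv) N
    refine ⟨max (g K) N, fun n hn => ?_⟩
    by_cases hex : ∃ k, g k = n
    · have hk : g hex.choose = n := hex.choose_spec
      have hKk : K ≤ hex.choose := by
        by_contra hlt
        push_neg at hlt
        have := hgmono' hlt
        omega
      have := hK _ hKk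
      simpa only [hM_def, dif_pos hex] using this
    · simp only [hM_def, dif_neg hex]
      omega
  have hM := h u M hMu hMv f
  refine ⟨φ, ?_⟩
  have := hM.comp hgmono'.tendsto_atTop
  convert this using 2 with k
  simp [Function.comp, hMg k]
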